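/- Let A ∈ ℝ^{d_c×d} have full row rank, Ã have rows spanning the orthogonal complement of the row space of A, and Σ be symmetric positive definite. Then Σ − ΣAᵀ(AΣAᵀ)^{-1}AΣ = Ãᵀ(ÃΣ^{-1}Ãᵀ)^{-1}Ã. -/

import Mathlib

open Matrix

lemma aux_posDef {m n : ℕ} (B : Matrix (Fin m) (Fin n) ℝ) (S : Matrix (Fin n) (Fin n) ℝ)
    (hS : S.PosDef) (hB : Function.Injective Bᵀ.mulVec) : (B * S * Bᵀ).PosDef := by
  have hST : Sᵀ = S := by
    ext i j
    simpa using congrFun (congrFun hS.1 i) j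
  rw [Matrix.posDef_iff_dotProduct_mulVec]
  constructor
  · unfold Matrix.IsHermitian
    rw [show (B * S * Bᵀ)ᴴ = (B * S * Bᵀ)ᵀ by ext i j; simp]
    rw [Matrix.transpose_mul, Matrix.transpose_mul, transpose_transpose, hST,
      Matrix.mul_assoc]
  · intro x hx
    have hxne : Bᵀ *ᵥ x ≠ 0 := fun h => hx (hB (by simpa using h))
    have hpos := hS.dotProduct_mulVec_pos hxne
    have key : x ⬝ᵥ (B * S * Bᵀ) *ᵥ x = (Bᵀ *ᵥ x) ⬝ᵥ S *ᵥ (Bᵀ *ᵥ x) := by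
      rw [← Matrix.mulVec_mulVec, ← Matrix.mulVec_mulVec, Matrix.dotProduct_mulVec,
        ← Matrix.mulVec_transpose]
    simpa [key] using hpos

lemma aux_mul_submatrix {l m n o : Type*} [Fintype m] (X : Matrix l m ℝ) (M : Matrix m n ℝ)
    (f : o → n) : X * M.submatrix id f = (X * M).submatrix id f := by
  ext i j; simp [Matrix.mul_apply]

/-- `Σ − Σ Aᵀ (A Σ Aᵀ)⁻¹ A Σ = Ãᵀ (Ã Σ⁻¹ Ãᵀ)⁻¹ Ã`, where `A` has full row rank and
the rows of `At` form a basis of the orthogonal complement of the row space of `A`. -/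
theorem conditional_covariance_eq {d dc : ℕ} (hdc : dc < d)
    (A : Matrix (Fin dc) (Fin d) ℝ) (hA : A.rank = dc)
    (At : Matrix (Fin (d - dc)) (Fin d) ℝ)
    (hAAt : A * Atᵀ = 0) (hAt : At.rank = d - dc)
    (Sg : Matrix (Fin d) (Fin d) ℝ) (hSg : Sg.PosDef) :
    Sg - Sg * Aᵀ * (A * Sg * Aᵀ)⁻¹ * A * Sg = Atᵀ * (At * Sg⁻¹ * Atᵀ)⁻¹ * At := by
  -- linear independence of rows
  have hAind : LinearIndependent ℝ (fun i => A i) := by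
    change LinearIndependent ℝ A.row
    rw [linearIndependent_iff_card_eq_finrank_span]
    rw [Set.finrank, ← rank_eq_finrank_span_row, hA, Fintype.card_fin]
  have hAtind : LinearIndependent ℝ (fun i => At i) := by
    change LinearIndependent ℝ At.row
    rw [linearIndependent_iff_card_eq_finrank_span]
    rw [Set.finrank, ← rank_eq_finrank_span_row, hAt, Fintype.card_fin]
  have hAinj : Function.Injective Aᵀ.mulVec := by
    rw [Matrix.mulVec_injective_iff, col_transpose]; exact hAind
  have hAtinj : Function.Injective Atᵀ.mulVec := by
    rw [Matrix.mulVec_injective_iff, col_transpose]; exact hAtind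
  have hP1 : (A * Sg * Aᵀ).PosDef := aux_posDef A Sg hSg hAinj
  have hP2 : (At * Sg⁻¹ * Atᵀ).PosDef := aux_posDef At Sg⁻¹ hSg.inv hAtinj
  have hU1 : IsUnit (A * Sg * Aᵀ).det := (Matrix.isUnit_iff_isUnit_det _).mp hP1.isUnit
  have hU2 : IsUnit (At * Sg⁻¹ * Atᵀ).det := (Matrix.isUnit_iff_isUnit_det _).mp hP2.isUnit
  have hUS : IsUnit Sg.det := (Matrix.isUnit_iff_isUnit_det _).mp hSg.isUnit
  have hAtA : At * Aᵀ = 0 := by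
    have := congrArg Matrix.transpose hAAt
    simpa [Matrix.transpose_mul] using this
  set L : Matrix (Fin d) (Fin d) ℝ := Sg - Sg * Aᵀ * (A * Sg * Aᵀ)⁻¹ * A * Sg with hL
  set R : Matrix (Fin d) (Fin d) ℝ := Atᵀ * (At * Sg⁻¹ * Atᵀ)⁻¹ * At with hR
  -- key column identities
  have hLA : (L - R) * Aᵀ = 0 := by
    have h1 : L * Aᵀ = 0 := by
      rw [hL, Matrix.sub_mul]
      have : Sg * Aᵀ * (A * Sg * Aᵀ)⁻¹ * A * Sg * Aᵀ
          = Sg * Aᵀ * ((A * Sg * Aᵀ)⁻¹ * (A * Sg * Aᵀ)) := by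
        simp only [Matrix.mul_assoc]
      rw [this, Matrix.nonsing_inv_mul _ hU1, Matrix.mul_one, sub_self]
    have h2 : R * Aᵀ = 0 := by
      simp only [hR, Matrix.mul_assoc, hAtA, Matrix.mul_zero]
    rw [Matrix.sub_mul, h1, h2, sub_zero]
  have hLAt : (L - R) * (Sg⁻¹ * Atᵀ) = 0 := by
    have h1 : L * (Sg⁻¹ * Atᵀ) = Atᵀ := by
      rw [hL, Matrix.sub_mul]
      have e1 : Sg * (Sg⁻¹ * Atᵀ) = Atᵀ := by
        rw [← Matrix.mul_assoc, Matrix.mul_nonsing_inv _ hUS, Matrix.one_mul]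
      have e2 : Sg * Aᵀ * (A * Sg * Aᵀ)⁻¹ * A * Sg * (Sg⁻¹ * Atᵀ)
          = Sg * Aᵀ * (A * Sg * Aᵀ)⁻¹ * (A * Atᵀ) := by
        simp only [Matrix.mul_assoc]
        rw [← Matrix.mul_assoc Sg Sg⁻¹, Matrix.mul_nonsing_inv _ hUS, Matrix.one_mul]
      rw [e1, e2, hAAt, Matrix.mul_zero, sub_zero]
    have h2 : R * (Sg⁻¹ * Atᵀ) = Atᵀ := by
      rw [hR]
      have : Atᵀ * (At * Sg⁻¹ * Atᵀ)⁻¹ * At * (Sg⁻¹ * Atᵀ)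
          = Atᵀ * ((At * Sg⁻¹ * Atᵀ)⁻¹ * (At * Sg⁻¹ * Atᵀ)) := by
        simp only [Matrix.mul_assoc]
      rw [this, Matrix.nonsing_inv_mul _ hU2, Matrix.mul_one]
    rw [Matrix.sub_mul, h1, h2, sub_self]
  -- the invertible matrix of columns
  have hdd : dc + (d - dc) = d := Nat.add_sub_cancel' hdc.le
  let e : Fin dc ⊕ Fin (d - dc) ≃ Fin d := finSumFinEquiv.trans (finCongr hdd)
  set N : Matrix (Fin d) (Fin d) ℝ :=
    (fromCols Aᵀ (Sg⁻¹ * Atᵀ)).submatrix id e.symm with hN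
  have hker : ∀ v, N *ᵥ v = 0 → v = 0 := by
    intro v hv
    rw [hN, Matrix.submatrix_mulVec_equiv] at hv
    set w := v ∘ e.symm.symm with hw
    have hw0 : fromCols Aᵀ (Sg⁻¹ * Atᵀ) *ᵥ w = 0 := by
      funext i; exact congrFun hv i
    have hwelim : fromCols Aᵀ (Sg⁻¹ * Atᵀ) *ᵥ
        (Sum.elim (w ∘ Sum.inl) (w ∘ Sum.inr)) = 0 := by
      rw [Sum.elim_comp_inl_inr]; exact hw0
    rw [Matrix.fromCols_mulVec_sumElim] at hwelim
    have hAtw : (At * Sg⁻¹ * Atᵀ) *ᵥ (w ∘ Sum.inr) = 0 := by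
      have := congrArg (fun z => At *ᵥ z) hwelim
      simpa [Matrix.mulVec_add, Matrix.mulVec_mulVec, hAtA, Matrix.mul_assoc] using this
    have hw2 : w ∘ Sum.inr = 0 := by
      have hinj : Function.Injective (At * Sg⁻¹ * Atᵀ).mulVec :=
        Matrix.mulVec_injective_iff_isUnit.mpr hP2.isUnit
      apply hinj
      simpa using hAtw
    have hw1 : w ∘ Sum.inl = 0 := by
      apply hAinj
      have : Aᵀ *ᵥ (w ∘ Sum.inl) + (Sg⁻¹ * Atᵀ) *ᵥ (w ∘ Sum.inr) = 0 := hwelim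
      rw [hw2] at this
      simpa using this
    have hwz : w = 0 := by
      funext i
      cases i with
      | inl i => exact congrFun hw1 i
      | inr i => exact congrFun hw2 i
    funext i
    have := congrFun hwz (e.symm i)
    simpa [hw] using this
  have hNinj : Function.Injective N.mulVec := by
    intro v₁ v₂ h
    have : N *ᵥ (v₁ - v₂) = 0 := by
      rw [Matrix.mulVec_sub, h, sub_self]
    exact sub_eq_zero.mp (hker _ this)
  have hNunit : IsUnit N.det :=
    (Matrix.isUnit_iff_isUnit_det _).mp (Matrix.mulVec_injective_iff_isUnit.mp hNinj)
  have hLRN : (L - R) * N = 0 := by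
    rw [hN, aux_mul_submatrix, Matrix.mul_fromCols, hLA, hLAt, Matrix.fromCols_zero]
    simp
  have hLR : L - R = 0 := by
    have := congrArg (fun X => X * N⁻¹) hLRN
    simpa [Matrix.mul_assoc, Matrix.mul_nonsing_inv _ hNunit] using this
  exact sub_eq_zero.mp hLR
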